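/- Every totally transcendental complete first-order theory has an atomic model. -/

import Mathlib

open FirstOrder FirstOrder.Language

/-- A formula (in `n` free variables) is consistent with the theory `T` if it is realized by
some tuple in some model of `T`. -/
def ConsistentWith {L : FirstOrder.Language.{0,0}} (T : L.Theory) {n : ℕ} (φ : L.Formula (Fin n)) : Prop :=
  ∃ (M : Theory.ModelType.{0,0,0} T) (v : Fin n → M), φ.Realize v

/-- `φ` isolates a complete type in `T`: `T ∪ {∃x̄ φ}` is consistent, and for every formula `ψ`
in the same variables, either `T ⊢ φ → ψ` or `T ⊢ φ → ¬ψ` (semantically). -/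
def Isolates {L : FirstOrder.Language.{0,0}} (T : L.Theory) {n : ℕ} (φ : L.Formula (Fin n)) : Prop :=
  ConsistentWith T φ ∧
    ∀ ψ : L.Formula (Fin n),
      (∀ (M : Theory.ModelType.{0,0,0} T) (v : Fin n → M), φ.Realize v → ψ.Realize v) ∨
      (∀ (M : Theory.ModelType.{0,0,0} T) (v : Fin n → M), φ.Realize v → ¬ ψ.Realize v)

/-- The isolated types are dense in `T`: every formula consistent with `T` is implied, modulo
`T`, by a formula isolating a complete type. -/
def IsolatedTypesDense {L : FirstOrder.Language.{0,0}} (T : L.Theory) : Prop :=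
  ∀ (n : ℕ) (φ : L.Formula (Fin n)), ConsistentWith T φ →
    ∃ θ : L.Formula (Fin n), Isolates T θ ∧
      ∀ (M : Theory.ModelType.{0,0,0} T) (v : Fin n → M), θ.Realize v → φ.Realize v

/-- `M` is an atomic model of `T`: `M ⊨ T` and the type of every finite tuple from `M`
is isolated in `T`. -/
def IsAtomicModel {L : FirstOrder.Language.{0,0}} (T : L.Theory) (M : Type*) [L.Structure M] : Prop :=
  M ⊨ T ∧ ∀ (n : ℕ) (a : Fin n → M), ∃ φ : L.Formula (Fin n), φ.Realize a ∧ Isolates T φ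

/-- `T` is totally transcendental: there is no binary tree of formulas
`⟨φ_s(x̄, ȳ_s) : s ∈ 2^{<ω}⟩` with parameters `⟨ā_s⟩` in some model of `T` such that along each
branch `η ∈ 2^ω` the corresponding type is consistent (i.e., finitely satisfiable in the
model, the parameters lying in that model). -/
def TotallyTranscendental {L : FirstOrder.Language.{0,0}} (T : L.Theory) : Prop :=
  ¬ ∃ (k : ℕ) (M : Theory.ModelType.{0,0,0} T) (m : List Bool → ℕ)
      (φ : (s : List Bool) → L.Formula (Fin k ⊕ Fin (m s)))
      (a : (s : List Bool) → Fin (m s) → M),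
      ∀ (η : ℕ → Bool) (N : ℕ), ∃ x : Fin k → M, ∀ n, n < N →
        ((φ (List.ofFn fun i : Fin n => η i)).Realize
            (Sum.elim x (a (List.ofFn fun i : Fin n => η i))) ↔ η n = true)


/-! ### Auxiliary development -/

section AtomicAux

variable {L : FirstOrder.Language.{0,0}} {T : L.Theory}

/-- Transfer of a universally valid formula from one model of a complete theory to all models. -/
lemma my_transfer (hT : T.IsComplete) (M : Theory.ModelType.{0,0,0} T) {n : ℕ}
    (χ : L.Formula (Fin n)) (h : ∀ v : Fin n → M, χ.Realize v) :
    ∀ (M' : Theory.ModelType.{0,0,0} T) (v : Fin n → M'), χ.Realize v := by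
  intro M' v
  set σ : L.Sentence := (χ.relabel (Sum.inr : Fin n → Empty ⊕ Fin n)).iAlls (Fin n) with hσdef
  rcases hT.2 σ with hσ | hσ
  · have h1 : M' ⊨ σ := Theory.models_sentence_iff.1 hσ M'
    exact (Formula.realize_relabel (g := Sum.inr)).1 ((Formula.realize_iAlls (M := M')).1 h1 v)
  · exfalso
    have h1 : M ⊨ σ.not := Theory.models_sentence_iff.1 hσ M
    rw [Sentence.realize_not] at h1
    exact h1 ((Formula.realize_iAlls (M := M)).2 (fun i => Formula.realize_relabel.2 (h i)))

/-- A formula over parameters from `A` in one free variable. -/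
structure PF {L : FirstOrder.Language.{0,0}} {T : L.Theory} (M : Theory.ModelType.{0,0,0} T)
    (A : Set M) where
  m : ℕ
  φ : L.Formula (Fin 1 ⊕ Fin m)
  c : Fin m → M
  hc : ∀ i, c i ∈ A

variable {M : Theory.ModelType.{0,0,0} T} {A : Set M}

def PF.Rz (p : PF M A) (x : M) : Prop := p.φ.Realize (Sum.elim (fun _ => x) p.c)

def PF.Sat (p : PF M A) : Prop := ∃ x : M, p.Rz x

def PF.Isol (p : PF M A) : Prop :=
  ∀ q : PF M A, (∀ x, p.Rz x → q.Rz x) ∨ (∀ x, p.Rz x → ¬ q.Rz x)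

def PF.and (p q : PF M A) : PF M A :=
  ⟨p.m + q.m,
    (p.φ.relabel (Sum.map id (Fin.castAdd q.m))) ⊓ (q.φ.relabel (Sum.map id (Fin.natAdd p.m))),
    Fin.append p.c q.c,
    by
      intro i
      refine Fin.addCases (fun j => ?_) (fun j => ?_) i
      · rw [Fin.append_left]; exact p.hc j
      · rw [Fin.append_right]; exact q.hc j⟩

lemma PF.rz_and (p q : PF M A) (x : M) : (p.and q).Rz x ↔ p.Rz x ∧ q.Rz x := by
  unfold PF.Rz PF.and
  rw [Formula.realize_inf, Formula.realize_relabel, Formula.realize_relabel]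
  have e1 : (Sum.elim (fun _ : Fin 1 => x) (Fin.append p.c q.c) ∘ Sum.map id (Fin.castAdd q.m))
      = Sum.elim (fun _ : Fin 1 => x) p.c := by
    funext a; rcases a with a | a <;> simp [Fin.append_left]
  have e2 : (Sum.elim (fun _ : Fin 1 => x) (Fin.append p.c q.c) ∘ Sum.map id (Fin.natAdd p.m))
      = Sum.elim (fun _ : Fin 1 => x) q.c := by
    funext a; rcases a with a | a <;> simp [Fin.append_right]
  rw [e1, e2]

def PF.neg (p : PF M A) : PF M A := ⟨p.m, p.φ.not, p.c, p.hc⟩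

lemma PF.rz_neg (p : PF M A) (x : M) : p.neg.Rz x ↔ ¬ p.Rz x := by
  unfold PF.Rz PF.neg
  exact Formula.realize_not

def PF.cond (p : PF M A) (b : Bool) : PF M A := if b then p else p.neg

lemma PF.rz_cond (p : PF M A) (b : Bool) (x : M) : (p.cond b).Rz x ↔ (p.Rz x ↔ b = true) := by
  cases b <;> simp [PF.cond, PF.rz_neg]

/-- Density of isolated formulas over any parameter set, from total transcendence. -/
lemma my_density (htt : TotallyTranscendental T) (p : PF M A) (hp : p.Sat) :
    ∃ q : PF M A, q.Sat ∧ (∀ x, q.Rz x → p.Rz x) ∧ q.Isol := by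
  by_contra hno
  push_neg at hno
  have H : ∀ q : {q : PF M A // q.Sat ∧ ∀ x, q.Rz x → p.Rz x},
      ∃ r : PF M A, (∃ x, q.1.Rz x ∧ r.Rz x) ∧ (∃ x, q.1.Rz x ∧ ¬ r.Rz x) := by
    rintro ⟨q, hqs, hqi⟩
    have h0 := hno q hqs hqi
    unfold PF.Isol at h0
    obtain ⟨r0, hr0⟩ := not_forall.1 h0
    rw [not_or] at hr0
    obtain ⟨x1, hx1⟩ := not_forall.1 hr0.1
    obtain ⟨x2, hx2⟩ := not_forall.1 hr0.2
    rw [Classical.not_imp] at hx1 hx2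
    exact ⟨r0, ⟨x2, hx2.1, not_not.1 hx2.2⟩, ⟨x1, hx1.1, hx1.2⟩⟩
  choose r hr1 hr2 using H
  let node : List Bool → {q : PF M A // q.Sat ∧ ∀ x, q.Rz x → p.Rz x} :=
    fun l => l.rec ⟨p, hp, fun _ h => h⟩
      (fun b _ ih => ⟨ih.1.and ((r ih).cond b),
        by
          constructor
          · cases b
            · obtain ⟨x, hx, hx'⟩ := hr2 ih
              exact ⟨x, (PF.rz_and _ _ x).2 ⟨hx, (PF.rz_cond _ _ x).2 (by simpa using hx')⟩⟩
            · obtain ⟨x, hx, hx'⟩ := hr1 ih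
              exact ⟨x, (PF.rz_and _ _ x).2 ⟨hx, (PF.rz_cond _ _ x).2 (by simpa using hx')⟩⟩
          · intro x hx
            exact ih.2.2 x ((PF.rz_and _ _ x).1 hx).1⟩)
  have node_cons : ∀ (b : Bool) (s : List Bool) (x : M),
      (node (b :: s)).1.Rz x ↔ (node s).1.Rz x ∧ ((r (node s)).Rz x ↔ b = true) := by
    intro b s x
    show ((node s).1.and ((r (node s)).cond b)).Rz x ↔ _
    rw [PF.rz_and, PF.rz_cond]
  apply htt
  refine ⟨1, M, fun s => (r (node s.reverse)).m, fun s => (r (node s.reverse)).φ,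
    fun s => (r (node s.reverse)).c, ?_⟩
  intro η N
  obtain ⟨x, hx⟩ := (node ((List.ofFn fun i : Fin N => η i).reverse)).2.1
  refine ⟨fun _ => x, ?_⟩
  have key : ∀ (N' : ℕ), (node ((List.ofFn fun i : Fin N' => η i).reverse)).1.Rz x →
      ∀ n < N', ((r (node ((List.ofFn fun i : Fin n => η i).reverse))).Rz x ↔ η n = true) := by
    intro N'
    induction N' with
    | zero => intro _ n hn; omega
    | succ N' ih =>
      have hrev : (List.ofFn fun i : Fin (N' + 1) => η i).reverse
          = η N' :: (List.ofFn fun i : Fin N' => η i).reverse := by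
        rw [List.ofFn_succ']
        simp
      rw [hrev]
      intro h n hn
      rw [node_cons] at h
      rcases Nat.lt_succ_iff_lt_or_eq.1 hn with hn' | rfl
      · exact ih h.1 n hn'
      · exact h.2
  intro n hn
  exact key N hx n hn

/-- Projection of an isolated formula along an arbitrary map of index sets. -/
lemma my_proj {K n : ℕ} (θ : L.Formula (Fin K)) (hθ : Isolates T θ) (G : Fin n → Fin K) :
    ∃ θ' : L.Formula (Fin n),
      (∀ (M' : Theory.ModelType.{0,0,0} T) (V : Fin K → M'), θ.Realize V → θ'.Realize (V ∘ G)) ∧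
      Isolates T θ' := by
  classical
  set inner : L.Formula (Fin n ⊕ Fin K) :=
    (θ.relabel Sum.inr) ⊓ (BoundedFormula.iInf
      (fun i : Fin n => Term.equal (Term.var (Sum.inl i)) (Term.var (Sum.inr (G i))))) with hinner
  set θ' : L.Formula (Fin n) := inner.iExs (Fin K) with hθ'
  have hrz : ∀ (M' : Theory.ModelType.{0,0,0} T) (v : Fin n → M'),
      θ'.Realize v ↔ ∃ W : Fin K → M', θ.Realize W ∧ ∀ i, v i = W (G i) := by
    intro M' v
    rw [hθ', Formula.realize_iExs]
    constructor
    · rintro ⟨W, hW⟩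
      have hW' : inner.Realize (Sum.elim v W) := hW
      rw [hinner, Formula.realize_inf, Formula.realize_relabel] at hW'
      refine ⟨W, hW'.1, fun i => ?_⟩
      have := BoundedFormula.realize_iInf.1 hW'.2 i
      exact Formula.realize_equal.1 this
    · rintro ⟨W, hW1, hW2⟩
      refine ⟨W, ?_⟩
      show inner.Realize (Sum.elim v W)
      rw [hinner, Formula.realize_inf, Formula.realize_relabel]
      refine ⟨hW1, BoundedFormula.realize_iInf.2 fun i => ?_⟩
      exact Formula.realize_equal.2 (hW2 i)
  refine ⟨θ', fun M' V hV => (hrz M' (V ∘ G)).2 ⟨V, hV, fun _ => rfl⟩, ?_, ?_⟩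
  · obtain ⟨M₀, V, hV⟩ := hθ.1
    exact ⟨M₀, V ∘ G, (hrz M₀ (V ∘ G)).2 ⟨V, hV, fun _ => rfl⟩⟩
  · intro ψ
    rcases hθ.2 (ψ.relabel G) with h | h
    · left
      intro M' v hv
      obtain ⟨W, hW1, hW2⟩ := (hrz M' v).1 hv
      rw [funext hW2]
      have := h M' W hW1
      rwa [Formula.realize_relabel] at this
    · right
      intro M' v hv
      obtain ⟨W, hW1, hW2⟩ := (hrz M' v).1 hv
      rw [funext hW2]
      have := h M' W hW1
      rwa [Formula.realize_relabel] at this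

def Good (M : Theory.ModelType.{0,0,0} T) (A : Set M) : Prop :=
  ∀ (n : ℕ) (w : Fin n → M), (∀ i, w i ∈ A) →
    ∃ θ : L.Formula (Fin n), θ.Realize w ∧ Isolates T θ

lemma my_key (hA : Good M A) (q : PF M A) (hqI : q.Isol) (b : M) (hb : q.Rz b)
    (j : ℕ) (u : Fin j → M) (hu : ∀ i, u i ∈ A) :
    ∃ θs : L.Formula (Fin (j + q.m + 1)),
      θs.Realize (Fin.snoc (Fin.append u q.c) b) ∧ Isolates T θs := by
  classical
  set K := j + q.m with hK
  set F : Fin K → M := Fin.append u q.c with hF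
  have hFA : ∀ i, F i ∈ A := by
    intro i
    refine Fin.addCases (fun i' => ?_) (fun i' => ?_) i
    · rw [hF, Fin.append_left]; exact hu i'
    · rw [hF, Fin.append_right]; exact q.hc i'
  obtain ⟨θ, hθR, hθI⟩ := hA K F hFA
  set ρ : Fin 1 ⊕ Fin q.m → Fin (K + 1) :=
    Sum.elim (fun _ => Fin.last K) (fun i => (Fin.natAdd j i).castSucc) with hρ
  set χ : L.Formula (Fin (K + 1)) := q.φ.relabel ρ with hχ
  set θL : L.Formula (Fin (K + 1)) := θ.relabel Fin.castSucc with hθL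
  set θs : L.Formula (Fin (K + 1)) := θL ⊓ χ with hθs
  have rz_θs : ∀ (M' : Theory.ModelType.{0,0,0} T) (V : Fin (K + 1) → M'),
      θs.Realize V ↔ θ.Realize (V ∘ Fin.castSucc) ∧ q.φ.Realize (V ∘ ρ) := by
    intro M' V
    rw [hθs, Formula.realize_inf, hθL, hχ, Formula.realize_relabel, Formula.realize_relabel]
  have comp_ρ : ∀ x : M,
      (Fin.snoc F x : Fin (K+1) → M) ∘ ρ = Sum.elim (fun _ => x) q.c := by
    intro x
    funext a
    rcases a with a | a
    · simp [hρ]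
    · simp only [hρ, Function.comp_apply, Sum.elim_inr, Fin.snoc_castSucc, hF, Fin.append_right]
  have comp_cast : ∀ (M' : Theory.ModelType.{0,0,0} T) (W : Fin K → M') (x : M'),
      (Fin.snoc W x : Fin (K+1) → M') ∘ Fin.castSucc = W := by
    intro M' W x
    funext i
    simp [Fin.snoc_castSucc]
  have snoc_self : ∀ (M' : Theory.ModelType.{0,0,0} T) (V : Fin (K+1) → M'),
      (Fin.snoc (V ∘ Fin.castSucc) (V (Fin.last K)) : Fin (K+1) → M') = V := by
    intro M' V
    funext i
    refine Fin.lastCases ?_ (fun i' => ?_) i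
    · simp
    · simp [Fin.snoc_castSucc]
  have rz_χ : ∀ x : M, χ.Realize (Fin.snoc F x : Fin (K+1) → M) ↔ q.Rz x := by
    intro x
    rw [hχ, Formula.realize_relabel, comp_ρ]
    exact Iff.rfl
  have hθsR : θs.Realize (Fin.snoc F b : Fin (K+1) → M) := by
    rw [rz_θs]
    constructor
    · rw [comp_cast]; exact hθR
    · rw [comp_ρ]; exact hb
  have helper : ∀ ψ : L.Formula (Fin (K + 1)),
      (∀ x : M, q.Rz x → ψ.Realize (Fin.snoc F x : Fin (K+1) → M)) →
      ∀ (M' : Theory.ModelType.{0,0,0} T) (V : Fin (K+1) → M'), θs.Realize V → ψ.Realize V := by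
    intro ψ hpos
    set f : Fin (K + 1) → Fin K ⊕ Fin 1 :=
      fun i => Fin.lastCases (Sum.inr 0) Sum.inl i with hf
    set σ : L.Formula (Fin K) := ((χ.imp ψ).relabel f).iAlls (Fin 1) with hσ
    have rz_σ : ∀ (M' : Theory.ModelType.{0,0,0} T) (W : Fin K → M'),
        σ.Realize W ↔ ∀ x : M', (χ.imp ψ).Realize (Fin.snoc W x : Fin (K+1) → M') := by
      intro M' W
      rw [hσ, Formula.realize_iAlls]
      simp only [Formula.realize_relabel, Function.comp_def]
      have snoc_eq : ∀ i : Fin 1 → M',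
          (fun a => Sum.elim W i (f a)) = (Fin.snoc W (i 0) : Fin (K+1) → M') := by
        intro i
        funext a
        refine Fin.lastCases ?_ (fun a' => ?_) a
        · simp [hf]
        · simp [hf, Fin.snoc_castSucc]
      constructor
      · intro h x
        have h2 := h (fun _ => x)
        rwa [snoc_eq] at h2
      · intro h i
        rw [snoc_eq]
        exact h (i 0)
    have hσM : σ.Realize F := by
      rw [rz_σ]
      intro x
      rw [Formula.realize_imp]
      intro hχx
      exact hpos x ((rz_χ x).1 hχx)
    rcases hθI.2 σ with hgood | hbad
    · intro M' V hV
      rw [rz_θs] at hV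
      have hσV := hgood M' (V ∘ Fin.castSucc) hV.1
      rw [rz_σ] at hσV
      have := hσV (V (Fin.last K))
      rw [snoc_self] at this
      rw [Formula.realize_imp] at this
      exact this (by rw [hχ, Formula.realize_relabel]; exact hV.2)
    · exact absurd hσM (hbad M F hθR)
  refine ⟨θs, hθsR, ⟨M, Fin.snoc F b, hθsR⟩, ?_⟩
  intro ψ
  set e : Fin (K + 1) → Fin 1 ⊕ Fin K := fun i => Fin.lastCases (Sum.inl 0) Sum.inr i with he
  have rz_ψq : ∀ x : M, (PF.Rz (M := M) (A := A) ⟨K, ψ.relabel e, F, hFA⟩ x)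
      ↔ ψ.Realize (Fin.snoc F x : Fin (K+1) → M) := by
    intro x
    show (ψ.relabel e).Realize (Sum.elim (fun _ => x) F) ↔ _
    rw [Formula.realize_relabel]
    have heq : (Sum.elim (fun _ : Fin 1 => x) F) ∘ e = (Fin.snoc F x : Fin (K+1) → M) := by
      funext a
      refine Fin.lastCases ?_ (fun a' => ?_) a
      · simp [he]
      · simp [he, Fin.snoc_castSucc]
    rw [heq]
  rcases hqI ⟨K, ψ.relabel e, F, hFA⟩ with hpos | hneg
  · left
    exact helper ψ (fun x hx => (rz_ψq x).1 (hpos x hx))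
  · right
    intro M' V hV
    have := helper ψ.not (fun x hx => by
      rw [Formula.realize_not]
      exact fun hcon => (hneg x hx) ((rz_ψq x).2 hcon)) M' V hV
    rwa [Formula.realize_not] at this

lemma my_good_empty (hT : T.IsComplete) (M : Theory.ModelType.{0,0,0} T) :
    Good M (∅ : Set M) := by
  intro n w hw
  match n, w with
  | 0, w =>
    have hwe : ∀ (X : Type) (v v' : Fin 0 → X), v = v' := by
      intro X v v'; funext i; exact i.elim0
    refine ⟨⊤, ?_, ⟨M, w, ?_⟩, ?_⟩
    · simp [Formula.Realize]
    · simp [Formula.Realize]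
    · intro ψ
      by_cases hψ : ψ.Realize w
      · left
        intro M' v _
        exact my_transfer hT M ψ (fun v' => by rwa [hwe M v' w]) M' v
      · right
        intro M' v _
        have := my_transfer hT M ψ.not
          (fun v' => by rw [Formula.realize_not, hwe M v' w]; exact hψ) M' v
        rwa [Formula.realize_not] at this
  | (n+1), w => exact absurd (hw 0) (Set.notMem_empty _)

lemma my_good_union (hA : Good M A) (q : PF M A) (hqI : q.Isol) (b : M) (hb : q.Rz b) :
    Good M (A ∪ {b}) := by
  classical
  intro n w hw
  rcases Set.eq_empty_or_nonempty A with hAe | ⟨a₀, ha₀⟩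
  · have hwb : ∀ i, w i = b := by
      intro i
      rcases hw i with h | h
      · rw [hAe] at h; exact absurd h (Set.notMem_empty _)
      · exact h
    obtain ⟨θs, hθsR, hθsI⟩ := my_key hA q hqI b hb 0 (fun i => i.elim0) (fun i => i.elim0)
    obtain ⟨θ', hθ'1, hθ'2⟩ := my_proj θs hθsI (fun _ : Fin n => Fin.last (0 + q.m))
    refine ⟨θ', ?_, hθ'2⟩
    have h2 := hθ'1 M _ hθsR
    have hwe : w = (Fin.snoc (Fin.append (fun i : Fin 0 => i.elim0) q.c) b : Fin (0+q.m+1) → M)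
        ∘ (fun _ : Fin n => Fin.last (0 + q.m)) := by
      funext i
      simp [hwb i, Fin.snoc_last]
    rw [hwe]
    exact h2
  · set u : Fin n → M := fun i => if h : w i ∈ A then w i else a₀ with hu_def
    have hu : ∀ i, u i ∈ A := by
      intro i
      rw [hu_def]
      dsimp only
      split
      · assumption
      · exact ha₀
    obtain ⟨θs, hθsR, hθsI⟩ := my_key hA q hqI b hb n u hu
    set G : Fin n → Fin (n + q.m + 1) :=
      fun i => if w i ∈ A then (Fin.castAdd q.m i).castSucc else Fin.last _ with hG
    obtain ⟨θ', hθ'1, hθ'2⟩ := my_proj θs hθsI G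
    refine ⟨θ', ?_, hθ'2⟩
    have h2 := hθ'1 M _ hθsR
    have hwe : w = (Fin.snoc (Fin.append u q.c) b : Fin (n+q.m+1) → M) ∘ G := by
      funext i
      by_cases h : w i ∈ A
      · simp only [hG, Function.comp_apply, if_pos h, Fin.snoc_castSucc, Fin.append_left,
          hu_def, dif_pos h]
      · have hwib : w i = b := by
          rcases hw i with h' | h'
          · exact absurd h' h
          · exact h'
        simp only [Function.comp_apply]
        rw [show G i = Fin.last (n + q.m) from by simp [hG, h], Fin.snoc_last, hwib]
    rw [hwe]
    exact h2

lemma my_chain_fin {α : Type} {c : Set (Set α)} (hc : IsChain (· ⊆ ·) c) :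
    ∀ (n : ℕ) (g : Fin (n+1) → Set α), (∀ i, g i ∈ c) → ∃ j, ∀ i, g i ⊆ g j := by
  intro n
  induction n with
  | zero =>
    intro g hg
    exact ⟨0, fun i => by rw [show i = 0 from Subsingleton.elim (α := Fin 1) i 0]⟩
  | succ n ih =>
    intro g hg
    obtain ⟨j, hj⟩ := ih (fun i => g i.castSucc) (fun i => hg _)
    rcases hc.total (hg j.castSucc) (hg (Fin.last _)) with h | h
    · refine ⟨Fin.last _, fun i => ?_⟩
      refine Fin.lastCases ?_ (fun i' => ?_) i
      · exact Set.Subset.refl _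
      · exact (hj i').trans h
    · refine ⟨j.castSucc, fun i => ?_⟩
      refine Fin.lastCases ?_ (fun i' => ?_) i
      · exact h
      · exact hj i'

lemma my_good_sUnion (hT : T.IsComplete) (c : Set (Set M)) (hc : IsChain (· ⊆ ·) c)
    (hcS : ∀ s ∈ c, Good M s) : Good M (⋃₀ c) := by
  intro n w hw
  match n, w with
  | 0, w => exact my_good_empty hT M 0 w (fun i => i.elim0)
  | (n+1), w =>
    have hw' : ∀ i, ∃ t, t ∈ c ∧ w i ∈ t := fun i => hw i
    choose g hg1 hg2 using hw'
    obtain ⟨j, hj⟩ := my_chain_fin hc n g hg1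
    exact hcS (g j) (hg1 j) (n+1) w (fun i => hj i (hg2 i))

end AtomicAux

/-- every totally transcendental complete first-order theory has an atomic
model. -/
theorem statement9 {L : FirstOrder.Language.{0,0}} (T : L.Theory) (hT : T.IsComplete)
    (htt : TotallyTranscendental T) :
    ∃ (M : Type) (_ : L.Structure M), Nonempty M ∧ IsAtomicModel T M := by
  classical
  obtain ⟨M⟩ := hT.1
  -- a maximal good subset of M
  obtain ⟨A, hmax⟩ := zorn_subset {A : Set M | Good M A} (by
    intro c hcS hc
    exact ⟨⋃₀ c, my_good_sUnion hT c hc (fun s hs => hcS hs), fun s hs => Set.subset_sUnion_of_mem hs⟩)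
  have hA : Good M A := hmax.1
  -- Tarski-Vaught closure of A
  have TVC : ∀ p : PF M A, p.Sat → ∃ b, b ∈ A ∧ p.Rz b := by
    intro p hp
    obtain ⟨q, ⟨b, hbq⟩, himp, hIsol⟩ := my_density htt p hp
    have hGU : Good M (A ∪ {b}) := my_good_union hA q hIsol b hbq
    have hsub : A ∪ {b} ⊆ A := hmax.2 hGU Set.subset_union_left
    exact ⟨b, hsub (Set.mem_union_right _ rfl), himp b hbq⟩
  -- A is the carrier of a substructure
  set S₀ : L.Substructure M :=
    { carrier := A
      fun_mem := by
        intro n f x hx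
        set p : PF M A := ⟨n, Term.equal (Term.var (Sum.inl 0))
          (Term.func f (fun i => Term.var (Sum.inr i))), x, hx⟩ with hp
        have rz_p : ∀ y : M, p.Rz y ↔ y = Structure.funMap f x := by
          intro y
          show (Term.equal _ _).Realize _ ↔ _
          rw [Formula.realize_equal]
          simp [Term.realize]
          exact Iff.rfl
        obtain ⟨b, hbA, hrz⟩ := TVC p ⟨Structure.funMap f x, (rz_p _).2 rfl⟩
        rw [(rz_p b).1 hrz] at hbA
        exact hbA } with hS₀
  -- A is the carrier of an elementary substructure
  have htv : ∀ (n : ℕ) (φ : L.BoundedFormula Empty (n + 1)) (x : Fin n → S₀) (a : M),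
      φ.Realize default (Fin.snoc ((↑) ∘ x) a : _ → M) →
        ∃ b : S₀, φ.Realize default (Fin.snoc ((↑) ∘ x) b : _ → M) := by
    intro n φ x a h
    set ρ : Empty ⊕ Fin (n+1) → Fin 1 ⊕ Fin n :=
      Sum.elim (fun e => e.elim) (fun i => Fin.lastCases (Sum.inl 0) Sum.inr i) with hρ
    have hxA : ∀ i, ((x i : M)) ∈ A := fun i => (x i).2
    set p : PF M A := ⟨n, (φ.toFormula).relabel ρ, fun i => ↑(x i), hxA⟩ with hp
    have rz_p : ∀ y : M,
        p.Rz y ↔ φ.Realize (default : Empty → M) (Fin.snoc ((↑) ∘ x) y : _ → M) := by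
      intro y
      show ((φ.toFormula).relabel ρ).Realize _ ↔ _
      rw [Formula.realize_relabel, BoundedFormula.realize_toFormula]
      have e1 : ((Sum.elim (fun _ : Fin 1 => y) (fun i => ((x i : M))) ∘ ρ) ∘ Sum.inl)
          = (default : Empty → M) := funext fun e => e.elim
      have e2 : ((Sum.elim (fun _ : Fin 1 => y) (fun i => ((x i : M))) ∘ ρ) ∘ Sum.inr)
          = (Fin.snoc ((↑) ∘ x) y : _ → M) := by
        funext a'
        refine Fin.lastCases ?_ (fun a'' => ?_) a'
        · simp [hρ]
        · simp [hρ, Fin.snoc_castSucc]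
      rw [e1, e2]
    obtain ⟨b, hbA, hrz⟩ := TVC p ⟨a, (rz_p a).2 h⟩
    exact ⟨⟨b, hbA⟩, (rz_p b).1 hrz⟩
  set ES : L.ElementarySubstructure M := S₀.toElementarySubstructure htv with hES
  -- nonemptiness
  have hne : ∃ b, b ∈ A := by
    set p : PF M A := ⟨0, Term.equal (Term.var (Sum.inl 0)) (Term.var (Sum.inl 0)),
      fun i => i.elim0, fun i => i.elim0⟩ with hp
    have rz_p : ∀ y : M, p.Rz y := by
      intro y
      show (Term.equal _ _).Realize _
      rw [Formula.realize_equal]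
    obtain ⟨b, hbA, _⟩ := TVC p ⟨Classical.arbitrary M, rz_p _⟩
    exact ⟨b, hbA⟩
  obtain ⟨b₀, hb₀⟩ := hne
  refine ⟨ES, inferInstance, ⟨⟨b₀, hb₀⟩⟩, ?_, ?_⟩
  · exact ElementarySubstructure.theory_model
  · intro n a
    have hwA : ∀ i, ((a i : M)) ∈ A := fun i => (a i).2
    obtain ⟨θ, hθR, hθI⟩ := hA n (fun i => ↑(a i)) hwA
    refine ⟨θ, ?_, hθI⟩
    exact (ES.subtype.map_formula θ a).1 hθR
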